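/- For any positive integers n and any n ∈ ℕ, the (n+3)×(n+3) symmetric matrix with upper-left block (9/10)I_n + (1/10)J_n, lower-right block (9/10)I₃ + (1/10)J₃, and off-diagonal blocks all of whose entries equal −1/5, is positive semidefinite. Equivalently, (9/10)I₃ + (1/10 − 2n/(5(9+n)))J₃ is positive semidefinite for every n ≥ 0. -/

import Mathlib

lemma quad_eq_aux (n : ℕ) (x : Fin n ⊕ Fin 3 → ℝ) :
    ∑ x_1 : Fin n,
        x (Sum.inl x_1) *
          (∑ x_2 : Fin n, ((if x_1 = x_2 then (9:ℝ) / 10 else 0) + 1 / 10) * x (Sum.inl x_2) +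
            ∑ x_2 : Fin 3, -1 / 5 * x (Sum.inr x_2)) +
      ∑ x_1 : Fin 3,
        x (Sum.inr x_1) *
          (∑ x_2 : Fin n, -1 / 5 * x (Sum.inl x_2) +
            ∑ x_2 : Fin 3, ((if x_1 = x_2 then (9:ℝ) / 10 else 0) + 1 / 10) * x (Sum.inr x_2))
    = 9/10 * (∑ i, x (Sum.inl i)^2) + 9/10 * (∑ j, x (Sum.inr j)^2)
      + 1/10 * (∑ i, x (Sum.inl i))^2 + 1/10 * (∑ j, x (Sum.inr j))^2
      - 2/5 * (∑ i, x (Sum.inl i)) * (∑ j, x (Sum.inr j)) := by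
  have h1 : ∑ x_1 : Fin n, x (Sum.inl x_1) * (9/10 * x (Sum.inl x_1))
      = 9/10 * (∑ i, x (Sum.inl i)^2) := by
    rw [Finset.mul_sum]; exact Finset.sum_congr rfl (fun i _ => by ring)
  have h2 : ∑ x_1 : Fin 3, x (Sum.inr x_1) * (9/10 * x (Sum.inr x_1))
      = 9/10 * (∑ j, x (Sum.inr j)^2) := by
    rw [Finset.mul_sum]; exact Finset.sum_congr rfl (fun i _ => by ring)
  simp only [add_mul, ite_mul, zero_mul, Finset.sum_add_distrib, Finset.sum_ite_eq,
    Finset.mem_univ, if_true, ← Finset.mul_sum, ← Finset.sum_mul, mul_add]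
  rw [h1, h2]; ring

lemma quad_eq_aux2 (c : ℝ) (y : Fin 3 → ℝ) :
    ∑ i : Fin 3, y i * (∑ j : Fin 3, ((if i = j then (9:ℝ)/10 else 0) + c) * y j)
    = 9/10 * (∑ i, y i ^ 2) + c * (∑ i, y i)^2 := by
  have h1 : ∑ i : Fin 3, y i * (9/10 * y i) = 9/10 * (∑ i, y i^2) := by
    rw [Finset.mul_sum]; exact Finset.sum_congr rfl (fun i _ => by ring)
  simp only [add_mul, ite_mul, zero_mul, Finset.sum_add_distrib, Finset.sum_ite_eq,
    Finset.mem_univ, if_true, ← Finset.mul_sum, ← Finset.sum_mul, mul_add]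
  rw [h1]; ring

theorem stmt_9 (n : ℕ) :
    (Matrix.fromBlocks
      ((9/10 : ℝ) • (1 : Matrix (Fin n) (Fin n) ℝ) + (1/10 : ℝ) • (Matrix.of fun _ _ => (1 : ℝ)))
      (Matrix.of fun (_ : Fin n) (_ : Fin 3) => (-1/5 : ℝ))
      (Matrix.of fun (_ : Fin 3) (_ : Fin n) => (-1/5 : ℝ))
      ((9/10 : ℝ) • (1 : Matrix (Fin 3) (Fin 3) ℝ) + (1/10 : ℝ) • (Matrix.of fun _ _ => (1 : ℝ)))).PosSemidef
    ∧
    ((9/10 : ℝ) • (1 : Matrix (Fin 3) (Fin 3) ℝ)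
      + (1/10 - 2 * n / (5 * (9 + n)) : ℝ) • (Matrix.of fun _ _ => (1 : ℝ))).PosSemidef := by
  constructor
  · rw [Matrix.posSemidef_iff_dotProduct_mulVec]; constructor
    · ext (i|i) (j|j) <;> simp [Matrix.IsHermitian, Matrix.one_apply, eq_comm]
    · intro x
      simp only [dotProduct, Matrix.mulVec, Fintype.sum_sum_type, Matrix.fromBlocks_apply₁₁,
        Matrix.fromBlocks_apply₁₂, Matrix.fromBlocks_apply₂₁, Matrix.fromBlocks_apply₂₂,
        Matrix.add_apply, Matrix.smul_apply, Matrix.of_apply, Matrix.one_apply, smul_eq_mul,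
        mul_ite, mul_one, mul_zero, RCLike.star_def, starRingEnd_apply, star_trivial]
      rw [quad_eq_aux n x]
      set S1 := ∑ i, x (Sum.inl i) with hS1
      set S2 := ∑ j, x (Sum.inr j) with hS2
      set Q1 := ∑ i, x (Sum.inl i) ^ 2 with hQ1
      set Q2 := ∑ j, x (Sum.inr j) ^ 2 with hQ2
      have hc1 : S1 ^ 2 ≤ (n : ℝ) * Q1 := by
        simpa using sq_sum_le_card_mul_sum_sq (s := (Finset.univ : Finset (Fin n)))
          (f := fun i => x (Sum.inl i))
      have hc2 : S2 ^ 2 ≤ 3 * Q2 := by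
        simpa using sq_sum_le_card_mul_sum_sq (s := (Finset.univ : Finset (Fin 3)))
          (f := fun j => x (Sum.inr j))
      have hq1 : 0 ≤ Q1 := Finset.sum_nonneg fun i _ => sq_nonneg _
      have hq2 : 0 ≤ Q2 := Finset.sum_nonneg fun j _ => sq_nonneg _
      rcases Nat.eq_zero_or_pos n with hn | hn
      · subst hn
        have hS1' : S1 = 0 := by
          have : S1 ^ 2 ≤ 0 := by simpa using hc1
          nlinarith [sq_nonneg S1]
        rw [hS1']
        nlinarith
      · have hn1 : (1 : ℝ) ≤ n := by exact_mod_cast hn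
        have hn0 : (0 : ℝ) ≤ n := by linarith
        nlinarith [hc1, mul_le_mul_of_nonneg_left hc2 hn0,
          mul_nonneg hn0 (sq_nonneg (S1 - 2 * S2)), sq_nonneg S1, hq1, hq2,
          mul_nonneg hn0 hq2, mul_nonneg hn0 hq1]
  · set c : ℝ := 1/10 - 2 * n / (5 * (9 + n)) with hc
    have h9 : (0:ℝ) < 9 + n := by positivity
    have hcge : -3/10 ≤ c := by
      rw [hc]
      have : 2 * (n:ℝ) / (5 * (9 + n)) ≤ 2/5 := by
        rw [div_le_div_iff₀ (by positivity) (by norm_num)]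
        nlinarith
      linarith
    rw [Matrix.posSemidef_iff_dotProduct_mulVec]; constructor
    · ext i j
      simp [Matrix.IsHermitian, Matrix.one_apply, eq_comm]
    · intro y
      simp only [dotProduct, Matrix.mulVec, Matrix.add_apply, Matrix.smul_apply,
        Matrix.of_apply, Matrix.one_apply, smul_eq_mul, mul_ite, mul_one, mul_zero,
        RCLike.star_def, starRingEnd_apply, star_trivial]
      rw [quad_eq_aux2 c y]
      have hcs : (∑ i, y i) ^ 2 ≤ 3 * ∑ i, y i ^ 2 := by
        simpa using sq_sum_le_card_mul_sum_sq (s := (Finset.univ : Finset (Fin 3)))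
          (f := y)
      have hq : 0 ≤ ∑ i, y i ^ 2 := Finset.sum_nonneg fun i _ => sq_nonneg _
      nlinarith [mul_nonneg (by linarith : (0:ℝ) ≤ c + 3/10) (sq_nonneg (∑ i, y i))]
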